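/- For any nonempty set B in R^p and δ > 0, if C is a convex set, then the δ-erosion of the δ-enlargement of C equals C: (C^δ)^{-δ} = C, where C^δ = {x : dist(x,C) ≤ δ} and C^{-δ} = {x : closedBall(x,δ) ⊂ C}. Moreover, this can fail for non-convex sets. -/

import Mathlib

open Metric EuclideanSpace
open scoped RealInnerProductSpace

/-- For a closed convex set `C ⊆ ℝ^p` and `δ > 0`, the `δ`-erosion of the `δ`-enlargement
of `C` is `C` itself: `(C^δ)^{-δ} = C`. Moreover (for `p ≥ 1`), this can fail for
non-convex (closed) sets. -/
theorem stmt3 {p : ℕ} (hp : 1 ≤ p) (δ : ℝ) (hδ : 0 < δ) :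
    (∀ C : Set (EuclideanSpace ℝ (Fin p)), Convex ℝ C → IsClosed C →
      {x | Metric.closedBall x δ ⊆ Metric.cthickening δ C} = C) ∧
    ∃ C : Set (EuclideanSpace ℝ (Fin p)), IsClosed C ∧ C.Nonempty ∧
      {x | Metric.closedBall x δ ⊆ Metric.cthickening δ C} ≠ C := by
  constructor
  · intro C hconv hcl
    ext x
    simp only [Set.mem_setOf_eq]
    constructor
    · intro hx
      by_contra hxC
      rcases C.eq_empty_or_nonempty with rfl | hne
      · have := hx (Metric.mem_closedBall_self hδ.le)
        simp [Metric.cthickening_empty] at this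
      obtain ⟨z, hzC, hz⟩ := hcl.exists_infDist_eq_dist hne x
      have hd : 0 < dist x z := by
        rw [← hz]
        exact (hcl.notMem_iff_infDist_pos hne).mp hxC
      set d := dist x z with hdd
      -- inner product inequality from convexity
      have hproj : ∀ w ∈ C, (inner ℝ (x - z) (w - z) : ℝ) ≤ 0 := by
        rw [← norm_eq_iInf_iff_real_inner_le_zero hconv hzC]
        rw [← dist_eq_norm, ← hdd, ← hz, Metric.infDist_eq_iInf]
        simp only [dist_eq_norm]
      set y := x + (δ / d) • (x - z) with hy
      have hyx : dist y x = δ := by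
        rw [dist_eq_norm]
        have : y - x = (δ / d) • (x - z) := by rw [hy]; abel
        rw [this, norm_smul, Real.norm_eq_abs, abs_of_pos (div_pos hδ hd),
          ← dist_eq_norm, ← hdd, div_mul_cancel₀ _ hd.ne']
      have hymem : y ∈ Metric.cthickening δ C := hx (Metric.mem_closedBall.mpr hyx.le)
      have hinfle : Metric.infDist y C ≤ δ :=
        ENNReal.toReal_le_of_le_ofReal hδ.le hymem
      obtain ⟨c, hcC, hc⟩ := hcl.exists_infDist_eq_dist hne y
      have hyc : dist y c ≤ δ := hc ▸ hinfle
      -- compute: dist y c ≥ d + δ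
      have hexp : y - c = (1 + δ / d) • (x - z) + (z - c) := by
        rw [hy, add_smul, one_smul]; abel
      have hip : (inner ℝ (x - z) (z - c) : ℝ) ≥ 0 := by
        have := hproj c hcC
        have h2 : (inner ℝ (x - z) (z - c) : ℝ) = -(inner ℝ (x - z) (c - z) : ℝ) := by
          rw [← inner_neg_right]; congr 1; abel
        linarith [h2 ▸ neg_nonneg.mpr this]
      have hsq : dist y c ^ 2 ≥ (d + δ) ^ 2 := by
        rw [dist_eq_norm, hexp, norm_add_sq_real, real_inner_smul_left, norm_smul,
          Real.norm_eq_abs, abs_of_pos (by positivity : (0:ℝ) < 1 + δ / d)]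
        have hnxz : ‖x - z‖ = d := by rw [← dist_eq_norm]
        have h1 : ((1 + δ / d) * ‖x - z‖) ^ 2 = (d + δ) ^ 2 := by
          rw [hnxz]; field_simp
        nlinarith [sq_nonneg ‖z - c‖, mul_nonneg (by positivity : (0:ℝ) ≤ 2 * (1 + δ / d)) hip]
      nlinarith [dist_nonneg (x := y) (y := c)]
    · intro hxC w hw
      exact Metric.mem_cthickening_of_dist_le w x δ C hxC (Metric.mem_closedBall.mp hw)
  · -- counterexample: the sphere of radius δ
    refine ⟨Metric.sphere 0 δ, Metric.isClosed_sphere, ?_, ?_⟩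
    · exact ⟨δ • EuclideanSpace.single (⟨0, hp⟩ : Fin p) (1:ℝ), by
        simp [norm_smul, abs_of_pos hδ, EuclideanSpace.norm_single, hδ.le]⟩
    · intro h
      have h0 : (0 : EuclideanSpace ℝ (Fin p)) ∈
          {x | Metric.closedBall x δ ⊆ Metric.cthickening δ (Metric.sphere 0 δ)} := by
        intro y hy
        rcases eq_or_ne y 0 with rfl | hy0
        · refine Metric.mem_cthickening_of_dist_le _
            (δ • EuclideanSpace.single (⟨0, hp⟩ : Fin p) (1:ℝ)) δ _ ?_ ?_
          · simp [norm_smul, abs_of_pos hδ, EuclideanSpace.norm_single, hδ.le]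
          · simp [dist_eq_norm, norm_smul, abs_of_pos hδ, EuclideanSpace.norm_single, hδ.le]
        · refine Metric.mem_cthickening_of_dist_le _ ((δ / ‖y‖) • y) δ _ ?_ ?_
          · simp [norm_smul, abs_of_pos (div_pos hδ (norm_pos_iff.mpr hy0)),
              div_mul_cancel₀ _ (norm_pos_iff.mpr hy0).ne', hδ.le]
          · have hyn : ‖y‖ ≤ δ := by simpa [dist_eq_norm] using hy
            have : dist y ((δ / ‖y‖) • y) = δ - ‖y‖ := by
              rw [dist_eq_norm]
              have : y - (δ / ‖y‖) • y = (1 - δ / ‖y‖) • y := by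
                rw [sub_smul, one_smul]
              rw [this, norm_smul, Real.norm_eq_abs]
              have hny : 0 < ‖y‖ := norm_pos_iff.mpr hy0
              rw [abs_of_nonpos (by rw [sub_nonpos]; exact (le_div_iff₀ hny).mpr (by linarith))]
              field_simp
              ring
            rw [this]
            linarith [norm_nonneg y]
      rw [h] at h0
      simp only [Metric.mem_sphere, dist_self] at h0
      exact hδ.ne' h0.symm
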